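/- Let β > γ > 0 and m ≥ 0 be constants, let a > 0, b ≥ 0, and let u : [t₀,∞) → ℝ be differentiable, nonnegative, and satisfy u'(t) ≤ (β·a/(m + b + u(t)) − γ)·u(t) for all t ≥ t₀. Then limsup_{t→∞} u(t) ≤ (β·a/γ − m − b)₊. -/

import Mathlib

open Filter

/-- If `u ≥ 0` satisfies `u' ≤ (βa/(m+b+u) − γ) u` with `β > γ > 0`,
then `limsup u ≤ (βa/γ − m − b)₊`. -/
theorem stmt_17 (β γ m a b t₀ : ℝ) (hγ : 0 < γ) (hβγ : γ < β) (hm : 0 ≤ m)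
    (ha : 0 < a) (hb : 0 ≤ b) (u : ℝ → ℝ)
    (hdiff : ∀ t ≥ t₀, DifferentiableAt ℝ u t)
    (hnn : ∀ t ≥ t₀, 0 ≤ u t)
    (hineq : ∀ t ≥ t₀, deriv u t ≤ (β * a / (m + b + u t) - γ) * u t) :
    limsup u atTop ≤ max (β * a / γ - m - b) 0 := by
  set M := max (β * a / γ - m - b) 0 with hMdef
  have hM0 : 0 ≤ M := le_max_right _ _
  have hβa : 0 < β * a := mul_pos (hγ.trans hβγ) ha
  have hγβa : 0 < β * a / γ := div_pos hβa hγ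
  have hK : β * a / γ ≤ m + b + M := by
    have h1 : β * a / γ - m - b ≤ M := le_max_left _ _
    linarith
  clear_value M
  -- Main claim: for every ε > 0, eventually u t ≤ M + ε.
  have key : ∀ ε > 0, ∀ᶠ t in atTop, u t ≤ M + ε := by
    intro ε hε
    have hKε : 0 < m + b + M + ε := by linarith
    set c := γ - β * a / (m + b + M + ε) with hc
    clear_value c
    have hcpos : 0 < c := by
      have h2 : β * a / (m + b + M + ε) < γ := by
        rw [div_lt_iff₀ hKε]
        have h3 : β * a / γ < m + b + M + ε := by linarith
        calc β * a = γ * (β * a / γ) := by field_simp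
          _ < γ * (m + b + M + ε) := by nlinarith
      linarith
    set δ := c * (M + ε) with hδ
    clear_value δ
    have hδpos : 0 < δ := by
      rw [hδ]; exact mul_pos hcpos (by linarith)
    -- pointwise decay whenever u is above the threshold
    have hdecay : ∀ t, t₀ ≤ t → M + ε ≤ u t → deriv u t ≤ -δ := by
      intro t ht hut
      have h1 : m + b + M + ε ≤ m + b + u t := by linarith
      have h2 : β * a / (m + b + u t) ≤ β * a / (m + b + M + ε) :=
        div_le_div_of_nonneg_left hβa.le hKε h1
      have h3 : β * a / (m + b + u t) - γ ≤ -c := by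
        rw [hc]; linarith
      have h4 := hineq t ht
      have h5 : (β * a / (m + b + u t) - γ) * u t ≤ (-c) * u t :=
        mul_le_mul_of_nonneg_right h3 (hnn t ht)
      have h6 : (-c) * u t ≤ -δ := by
        rw [hδ]; nlinarith
      linarith
    -- Quantitative decrease lemma: if u ≥ M+ε on [s,t], then u t ≤ u s - δ(t-s)
    have decay2 : ∀ s t : ℝ, t₀ ≤ s → s ≤ t →
        (∀ r, s ≤ r → r ≤ t → M + ε ≤ u r) → u t ≤ u s - δ * (t - s) := by
      intro s t hs hst habove
      set v : ℝ → ℝ := fun r => u r + δ * r with hv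
      have hanti : AntitoneOn v (Set.Icc s t) := by
        apply antitoneOn_of_deriv_nonpos (convex_Icc s t)
        · apply ContinuousOn.add
          · intro r hr
            exact ((hdiff r (hs.trans hr.1)).continuousAt).continuousWithinAt
          · exact (continuous_const.mul continuous_id).continuousOn
        · intro r hr
          rw [interior_Icc] at hr
          exact (((hdiff r (hs.trans hr.1.le)).add
            ((differentiableAt_fun_id).const_mul δ)).differentiableWithinAt)
        · intro r hr
          rw [interior_Icc] at hr
          have hdv : deriv v r = deriv u r + δ := by
            have h1 : HasDerivAt v (deriv u r + δ * 1) r :=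
              ((hdiff r (hs.trans hr.1.le)).hasDerivAt).add
                ((hasDerivAt_id r).const_mul δ)
            simpa using h1.deriv
          rw [hdv]
          have := hdecay r (hs.trans hr.1.le) (habove r hr.1.le hr.2.le)
          linarith
      have := hanti (Set.left_mem_Icc.2 hst) (Set.right_mem_Icc.2 hst) hst
      simp only [hv] at this
      linarith
    -- Claim A: there exists t₁ ≥ t₀ with u t₁ ≤ M + ε
    have claimA : ∃ t₁, t₀ ≤ t₁ ∧ u t₁ ≤ M + ε := by
      by_contra h
      push_neg at h
      set T := t₀ + (u t₀ + 1) / δ with hT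
      clear_value T
      have hTpos : t₀ ≤ T := by
        have : 0 ≤ (u t₀ + 1) / δ := div_nonneg (by linarith [hnn t₀ le_rfl]) hδpos.le
        linarith
      have hboundT := decay2 t₀ T le_rfl hTpos
        (fun r hr _ => (h r hr).le)
      have h7 : δ * (T - t₀) = u t₀ + 1 := by
        rw [hT]
        field_simp
        ring
      have h8 : u T ≤ -1 := by linarith
      have := hnn T hTpos
      linarith
    -- Claim B: once below the threshold, u stays below
    obtain ⟨t₁, ht₁, hu₁⟩ := claimA
    rw [eventually_atTop]
    refine ⟨t₁, fun t ht => ?_⟩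
    by_contra hlt
    push_neg at hlt
    -- last time u was ≤ M + ε before t
    set S := Set.Icc t₁ t ∩ u ⁻¹' Set.Iic (M + ε) with hS
    have hcontIcc : ContinuousOn u (Set.Icc t₁ t) := fun r hr =>
      ((hdiff r (ht₁.trans hr.1)).continuousAt).continuousWithinAt
    have hSclosed : IsClosed S :=
      ContinuousOn.preimage_isClosed_of_isClosed hcontIcc isClosed_Icc isClosed_Iic
    have hScomp : IsCompact S :=
      isCompact_Icc.of_isClosed_subset hSclosed Set.inter_subset_left
    have hSne : S.Nonempty := ⟨t₁, ⟨le_rfl, ht⟩, hu₁⟩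
    set s := sSup S with hs
    have hsS : s ∈ S := hScomp.sSup_mem hSne
    obtain ⟨⟨hts₁, hst⟩, hus⟩ := hsS
    have hust : u s ≤ M + ε := hus
    have hsnet : s ≠ t := by
      intro h; rw [h] at hust; linarith
    have hslt : s < t := lt_of_le_of_ne hst hsnet
    -- on (s, t], u > M + ε
    have habove : ∀ r, s < r → r ≤ t → M + ε ≤ u r := by
      intro r hsr hrt
      by_contra hur
      push_neg at hur
      have hrS : r ∈ S := ⟨⟨hts₁.trans hsr.le, hrt⟩, hur.le⟩
      have := le_csSup hScomp.bddAbove hrS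
      rw [← hs] at this
      linarith
    -- u is antitone on [s, t]
    have hanti : AntitoneOn u (Set.Icc s t) := by
      apply antitoneOn_of_deriv_nonpos (convex_Icc s t)
      · exact fun r hr => ((hdiff r ((ht₁.trans hts₁).trans hr.1)).continuousAt).continuousWithinAt
      · intro r hr
        rw [interior_Icc] at hr
        exact (hdiff r ((ht₁.trans hts₁).trans hr.1.le)).differentiableWithinAt
      · intro r hr
        rw [interior_Icc] at hr
        have := hdecay r ((ht₁.trans hts₁).trans hr.1.le) (habove r hr.1 hr.2.le)
        linarith
    have := hanti (Set.left_mem_Icc.2 hslt.le) (Set.right_mem_Icc.2 hslt.le) hslt.le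
    linarith
  -- conclude
  have hcobdd : IsCoboundedUnder (· ≤ ·) atTop u := by
    apply isCoboundedUnder_le_of_eventually_le (x := 0) atTop
    rw [eventually_atTop]
    exact ⟨t₀, fun t ht => hnn t ht⟩
  have hlim : ∀ ε > 0, limsup u atTop ≤ M + ε := fun ε hε =>
    limsup_le_of_le hcobdd (key ε hε)
  exact le_of_forall_pos_le_add hlim
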